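/- Let R be a commutative ring and J ⊆ I ⊆ R ideals such that I/J is generated over R/J by a regular sequence (or more generally, I/J is an ideal of linear type in R/J). Then J ∩ Iⁿ = J·Iⁿ⁻¹ for all n ≥ 1. -/

import Mathlib

open Ideal

/-- Key elementary lemma, by double induction on the list and on `n`:
if each `l[i]` is a nonzerodivisor mod `J ⊔ (l[0..i-1])`, then with
`I = J ⊔ (l)` we have `J ⊓ I^(n+1) = J * I^n`. -/
private lemma aluffi_aux {R : Type*} [CommRing R] (l : List R) :
    ∀ J : Ideal R,
      (∀ (i : ℕ) (h : i < l.length) (r : R),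
          l[i] * r ∈ J ⊔ Ideal.ofList (l.take i) → r ∈ J ⊔ Ideal.ofList (l.take i)) →
      ∀ n : ℕ, J ⊓ (J ⊔ Ideal.ofList l) ^ (n + 1) = J * (J ⊔ Ideal.ofList l) ^ n := by
  induction l with
  | nil =>
    intro J _ n
    rw [Ideal.ofList_nil, sup_bot_eq, inf_eq_right.mpr (Ideal.pow_le_self (Nat.succ_ne_zero n)),
      pow_succ, mul_comm]
  | cons a t ih =>
    intro J hH n
    have hIJ' : J ⊔ Ideal.ofList (a :: t) = (J ⊔ Ideal.span {a}) ⊔ Ideal.ofList t := by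
      rw [Ideal.ofList_cons, sup_assoc]
    have haI : a ∈ J ⊔ Ideal.ofList (a :: t) :=
      Ideal.mem_sup_right (Ideal.subset_span (List.mem_cons_self (a := a) (l := t)))
    have hreg0 : ∀ r : R, a * r ∈ J → r ∈ J := by
      intro r hr
      have h0 := hH 0 (Nat.succ_pos _) r
      simpa using h0 (by simpa using hr)
    have hHt : ∀ (i : ℕ) (h : i < t.length) (r : R),
        t[i] * r ∈ (J ⊔ Ideal.span {a}) ⊔ Ideal.ofList (t.take i) →
        r ∈ (J ⊔ Ideal.span {a}) ⊔ Ideal.ofList (t.take i) := by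
      intro i h r hr
      have h' := hH (i + 1) (by simpa using Nat.succ_lt_succ h) r
      simp only [List.getElem_cons_succ, List.take_succ_cons, Ideal.ofList_cons,
        ← sup_assoc] at h' ⊢
      exact h' hr
    have hmain' := ih (J ⊔ Ideal.span {a}) hHt
    induction n with
    | zero =>
      rw [pow_one, pow_zero, mul_one, inf_eq_left.mpr le_sup_left]
    | succ n ihn =>
      apply le_antisymm
      · intro x hx
        obtain ⟨hxJ, hxI⟩ := Submodule.mem_inf.mp hx
        have hx' : x ∈ (J ⊔ Ideal.span {a}) ⊓ ((J ⊔ Ideal.span {a}) ⊔ Ideal.ofList t) ^ (n + 1 + 1) :=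
          Submodule.mem_inf.mpr ⟨Ideal.mem_sup_left hxJ, by rw [← hIJ']; exact hxI⟩
        rw [hmain' (n + 1), Ideal.sup_mul, ← hIJ'] at hx'
        obtain ⟨p, hp, z, hz, hpz⟩ := Submodule.mem_sup.mp hx'
        obtain ⟨q, hq, haq⟩ := Ideal.mem_span_singleton_mul.mp hz
        have hpJ : p ∈ J := Ideal.mul_le_left hp
        have haqJ : a * q ∈ J := by
          rw [haq]
          have : z = x - p := by rw [← hpz]; ring
          rw [this]
          exact sub_mem hxJ hpJ
        have hqJ : q ∈ J := hreg0 q haqJ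
        have hq2 : q ∈ J * (J ⊔ Ideal.ofList (a :: t)) ^ n := by
          rw [← ihn]
          exact Submodule.mem_inf.mpr ⟨hqJ, hq⟩
        have haq2 : a * q ∈ J * (J ⊔ Ideal.ofList (a :: t)) ^ (n + 1) := by
          have h1 : a * q ∈ (J ⊔ Ideal.ofList (a :: t)) * (J * (J ⊔ Ideal.ofList (a :: t)) ^ n) :=
            Ideal.mul_mem_mul haI hq2
          have h2 : (J ⊔ Ideal.ofList (a :: t)) * (J * (J ⊔ Ideal.ofList (a :: t)) ^ n)
              = J * (J ⊔ Ideal.ofList (a :: t)) ^ (n + 1) := by ring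
          rwa [h2] at h1
        rw [← hpz, ← haq]
        exact add_mem hp haq2
      · refine le_inf Ideal.mul_le_left ?_
        calc J * (J ⊔ Ideal.ofList (a :: t)) ^ (n + 1)
            ≤ (J ⊔ Ideal.ofList (a :: t)) * (J ⊔ Ideal.ofList (a :: t)) ^ (n + 1) :=
              Ideal.mul_mono_left le_sup_left
          _ = (J ⊔ Ideal.ofList (a :: t)) ^ (n + 1 + 1) := by ring

/-- Translation: weak regularity of the image sequence in `R ⧸ J` gives the
elementary hypothesis over `R`. -/
private lemma aluffi_translate {R : Type*} [CommRing R] (J : Ideal R) (l : List R)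
    (hw : RingTheory.Sequence.IsWeaklyRegular (R ⧸ J) (l.map (Ideal.Quotient.mk J))) :
    ∀ (i : ℕ) (h : i < l.length) (r : R),
      l[i] * r ∈ J ⊔ Ideal.ofList (l.take i) → r ∈ J ⊔ Ideal.ofList (l.take i) := by
  intro i h r hr
  have h' : i < (l.map (Ideal.Quotient.mk J)).length := by simpa using h
  have hreg := hw.regular_mod_prev i h'
  set mk := Ideal.Quotient.mk J with hmk
  set U : Ideal (R ⧸ J) := Ideal.ofList ((l.map mk).take i) with hU
  have hUmap : U = Ideal.map mk (Ideal.ofList (l.take i)) := by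
    rw [hU, Ideal.map_ofList, List.map_take]
  have hUtop : (U • (⊤ : Submodule (R ⧸ J) (R ⧸ J))) = U := by
    rw [Ideal.smul_eq_mul, Ideal.mul_top]
  have hcomap : Ideal.comap mk U = Ideal.ofList (l.take i) ⊔ J := by
    rw [hUmap, Ideal.comap_map_of_surjective mk Ideal.Quotient.mk_surjective,
      ← RingHom.ker_eq_comap_bot, Ideal.mk_ker]
  -- image of the hypothesis
  have hmem : mk (l[i] * r) ∈ U := by
    have : l[i] * r ∈ Ideal.comap mk U := by
      rw [hcomap, sup_comm]; exact hr
    exact this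
  -- use regularity
  have hsmul : (l.map mk)[i] • (Submodule.Quotient.mk (mk r) :
      (R ⧸ J) ⧸ (U • (⊤ : Submodule (R ⧸ J) (R ⧸ J)))) = 0 := by
    rw [← Submodule.Quotient.mk_smul, Submodule.Quotient.mk_eq_zero, hUtop]
    have heq : (l.map mk)[i] • mk r = mk (l[i] * r) := by
      rw [List.getElem_map, smul_eq_mul, ← _root_.map_mul]
    rwa [heq]
  have hzero : (Submodule.Quotient.mk (mk r) :
      (R ⧸ J) ⧸ (U • (⊤ : Submodule (R ⧸ J) (R ⧸ J)))) = 0 :=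
    hreg (by simpa using hsmul)
  have : mk r ∈ U := by
    rw [← hUtop]
    exact (Submodule.Quotient.mk_eq_zero _).mp hzero
  have : r ∈ Ideal.comap mk U := this
  rw [hcomap, sup_comm] at this
  exact this

/-- If `I/J` is generated over `R/J` by a regular sequence, then `J ⊆ I` is
Aluffi torsion-free. -/
theorem aluffi_torsion_free_of_regular_sequence {R : Type*} [CommRing R]
    (J I : Ideal R) (hJI : J ≤ I)
    (hreg : ∃ L : List (R ⧸ J), RingTheory.Sequence.IsRegular (R ⧸ J) L ∧
      Ideal.span {a | a ∈ L} = I.map (Ideal.Quotient.mk J)) :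
    ∀ n : ℕ, 1 ≤ n → J ⊓ I ^ n = J * I ^ (n - 1) := by
  obtain ⟨L, hL, hspan⟩ := hreg
  -- choose lifts
  set l : List R := L.map (fun x => (Ideal.Quotient.mk_surjective x).choose) with hl
  have hlmap : l.map (Ideal.Quotient.mk J) = L := by
    rw [hl, List.map_map]
    conv_rhs => rw [← List.map_id L]
    exact List.map_congr_left fun x _ => (Ideal.Quotient.mk_surjective x).choose_spec
  have hIeq : J ⊔ Ideal.ofList l = I := by
    have h1 : Ideal.map (Ideal.Quotient.mk J) (Ideal.ofList l) = Ideal.map (Ideal.Quotient.mk J) I := by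
      rw [Ideal.map_ofList, hlmap, ← hspan]
    have h2 := congrArg (Ideal.comap (Ideal.Quotient.mk J)) h1
    rw [Ideal.comap_map_of_surjective _ Ideal.Quotient.mk_surjective,
      Ideal.comap_map_of_surjective _ Ideal.Quotient.mk_surjective,
      ← RingHom.ker_eq_comap_bot, Ideal.mk_ker] at h2
    rw [sup_comm, h2, sup_eq_left.mpr hJI]
  intro n hn
  obtain ⟨m, rfl⟩ : ∃ m, n = m + 1 := ⟨n - 1, (Nat.succ_pred_eq_of_pos hn).symm⟩
  have hH := aluffi_translate J l (by rw [hlmap]; exact hL.toIsWeaklyRegular)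
  have := aluffi_aux l J hH m
  rw [hIeq] at this
  simpa using this
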